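/- Let X, Y, Z be length spaces with basepoint-preserving continuous maps h : X → Z, g : Z → Y, f : X → Y satisfying f = g∘h. If g is a URL-map, then f is a URL-map if and only if h is a URL-map; moreover, given g, each of f and h is uniquely determined by the other. -/
import Mathlib


open Set

/-- A length space: a metric space with at least two points in which any two points
are joined by paths of length arbitrarily close to the distance between them. -/
def IsLengthSpace (X : Type*) [MetricSpace X] : Prop :=
  (∃ x y : X, x ≠ y) ∧
  ∀ x y : X, ∀ ε : ℝ, 0 < ε → ∃ (c : ℝ → X) (b : ℝ), 0 ≤ b ∧
    ContinuousOn c (Icc 0 b) ∧ c 0 = x ∧ c b = y ∧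
    eVariationOn c (Icc 0 b) < ENNReal.ofReal (dist x y + ε)

/-- `c : [a,b] → X` is a rectifiable path: continuous with finite length. -/
def IsRectPath {X : Type*} [MetricSpace X] (c : ℝ → X) (a b : ℝ) : Prop :=
  a ≤ b ∧ ContinuousOn c (Icc a b) ∧ eVariationOn c (Icc a b) ≠ ⊤

/-- `cL` is a lift of the path `c : [a,b] → Y` through `f` starting at `q`. -/
def IsLift {X Y : Type*} [MetricSpace X] [MetricSpace Y] (f : X → Y) (c : ℝ → Y)
    (a b : ℝ) (q : X) (cL : ℝ → X) : Prop :=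
  ContinuousOn cL (Icc a b) ∧ cL a = q ∧ ∀ t ∈ Icc a b, f (cL t) = c t

/-- A URL-map (unique rectifiable lifting map): (I) `f` preserves lengths of
rectifiable paths; (II) every rectifiable path in `Y` lifts uniquely through `f`
starting at any prescribed point of the fiber over its initial point, and the lift
is rectifiable. -/
def IsURLMap {X Y : Type*} [MetricSpace X] [MetricSpace Y] (f : X → Y) : Prop :=
  (∀ (c : ℝ → X) (a b : ℝ), IsRectPath c a b →
    eVariationOn (f ∘ c) (Icc a b) = eVariationOn c (Icc a b)) ∧
  (∀ (c : ℝ → Y) (a b : ℝ), IsRectPath c a b → ∀ q : X, f q = c a →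
    (∃ cL : ℝ → X, IsLift f c a b q cL ∧ eVariationOn cL (Icc a b) ≠ ⊤) ∧
    (∀ cL cL' : ℝ → X, IsLift f c a b q cL → IsLift f c a b q cL' →
      EqOn cL cL' (Icc a b)))

/-- Let `X, Y, Z` be length spaces with basepoint-preserving
continuous maps `h : X → Z`, `g : Z → Y`, `f : X → Y` satisfying `f = g ∘ h`.  If `g`
is a URL-map, then `f` is a URL-map if and only if `h` is a URL-map; moreover, given
`g`, each of `f` and `h` is uniquely determined by the other. -/
theorem urlMap_two_out_of_three {X Y Z : Type*} [MetricSpace X] [MetricSpace Y]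
    [MetricSpace Z] (hX : IsLengthSpace X) (hY : IsLengthSpace Y)
    (hZ : IsLengthSpace Z) (x₀ : X) (z₀ : Z) (y₀ : Y)
    (h : X → Z) (g : Z → Y) (f : X → Y)
    (hcont : Continuous h) (gcont : Continuous g) (fcont : Continuous f)
    (hbase : h x₀ = z₀) (gbase : g z₀ = y₀) (fbase : f x₀ = y₀)
    (hfg : f = g ∘ h) (hg : IsURLMap g) :
    (IsURLMap f ↔ IsURLMap h) ∧
    -- `f` is uniquely determined by `h` and `g`
    (∀ f' : X → Y, f' = g ∘ h → f' = f) ∧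
    -- `h` is uniquely determined by `f` and `g`
    (IsURLMap f → ∀ h' : X → Z, Continuous h' → h' x₀ = z₀ → g ∘ h' = f → h' = h) := by
  subst hfg
  refine ⟨⟨fun hf => ?_, fun hh => ?_⟩, fun f' hf' => hf', fun hf h' h'cont h'base hgh' => ?_⟩
  · -- f URL → h URL
    constructor
    · -- length preservation for h
      intro c a b hc
      have hfc : IsRectPath ((g ∘ h) ∘ c) a b :=
        ⟨hc.1, (gcont.comp hcont).comp_continuousOn hc.2.1,
          by rw [hf.1 c a b hc]; exact hc.2.2⟩
      obtain ⟨⟨cZ, hcZ, hcZfin⟩, huniqZ⟩ := hg.2 ((g ∘ h) ∘ c) a b hfc (h (c a)) rfl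
      have heq : EqOn (h ∘ c) cZ (Icc a b) :=
        huniqZ (h ∘ c) cZ ⟨hcont.comp_continuousOn hc.2.1, rfl, fun t ht => rfl⟩ hcZ
      have hvar : eVariationOn (h ∘ c) (Icc a b) = eVariationOn cZ (Icc a b) :=
        eVariationOn.eq_of_eqOn heq
      have hrect : IsRectPath (h ∘ c) a b :=
        ⟨hc.1, hcont.comp_continuousOn hc.2.1, hvar ▸ hcZfin⟩
      have hgv := hg.1 (h ∘ c) a b hrect
      exact hgv.symm.trans (hf.1 c a b hc)
    · -- lifting for h
      intro c a b hc q hq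
      have hgc : IsRectPath (g ∘ c) a b :=
        ⟨hc.1, gcont.comp_continuousOn hc.2.1, by rw [hg.1 c a b hc]; exact hc.2.2⟩
      have hfq : (g ∘ h) q = (g ∘ c) a := by simp [Function.comp_apply, hq]
      obtain ⟨⟨cL, hcL, hcLfin⟩, huniqL⟩ := hf.2 (g ∘ c) a b hgc q hfq
      obtain ⟨_, huniqZ⟩ := hg.2 (g ∘ c) a b hgc (c a) rfl
      have heq : EqOn (h ∘ cL) c (Icc a b) := by
        refine huniqZ (h ∘ cL) c
          ⟨hcont.comp_continuousOn hcL.1, ?_, fun t ht => hcL.2.2 t ht⟩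
          ⟨hc.2.1, rfl, fun t ht => rfl⟩
        simp [Function.comp_apply, hcL.2.1, hq]
      refine ⟨⟨cL, ⟨hcL.1, hcL.2.1, fun t ht => heq ht⟩, hcLfin⟩, ?_⟩
      intro d d' hd hd'
      have lift : ∀ e : ℝ → X, IsLift h c a b q e → IsLift (g ∘ h) (g ∘ c) a b q e :=
        fun e he => ⟨he.1, he.2.1, fun t ht => by
          simp only [Function.comp_apply]; rw [he.2.2 t ht]⟩
      exact huniqL d d' (lift d hd) (lift d' hd')
  · -- h URL → f URL
    constructor
    · intro c a b hc
      have hhc : IsRectPath (h ∘ c) a b :=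
        ⟨hc.1, hcont.comp_continuousOn hc.2.1, by rw [hh.1 c a b hc]; exact hc.2.2⟩
      exact (hg.1 (h ∘ c) a b hhc).trans (hh.1 c a b hc)
    · intro c a b hc q hq
      obtain ⟨⟨cZ, hcZ, hcZfin⟩, huniqZ⟩ := hg.2 c a b hc (h q) hq
      have hcZrect : IsRectPath cZ a b := ⟨hc.1, hcZ.1, hcZfin⟩
      obtain ⟨⟨cL, hcL, hcLfin⟩, huniqL⟩ := hh.2 cZ a b hcZrect q hcZ.2.1.symm
      refine ⟨⟨cL, ⟨hcL.1, hcL.2.1, fun t ht => ?_⟩, hcLfin⟩, ?_⟩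
      · show g (h (cL t)) = c t
        rw [hcL.2.2 t ht, hcZ.2.2 t ht]
      · intro d d' hd hd'
        have key : ∀ e : ℝ → X, IsLift (g ∘ h) c a b q e → EqOn (h ∘ e) cZ (Icc a b) := by
          intro e he
          exact huniqZ (h ∘ e) cZ
            ⟨hcont.comp_continuousOn he.1, by simp [Function.comp_apply, he.2.1],
              fun t ht => he.2.2 t ht⟩ hcZ
        have hd2 : IsLift h cZ a b q d := ⟨hd.1, hd.2.1, fun t ht => key d hd ht⟩
        have hd'2 : IsLift h cZ a b q d' := ⟨hd'.1, hd'.2.1, fun t ht => key d' hd' ht⟩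
        exact huniqL d d' hd2 hd'2
  · -- uniqueness of h
    funext x
    obtain ⟨c, b, hb0, ccont, hc0, hcb, hvar⟩ := hX.2 x₀ x 1 one_pos
    have hcrect : IsRectPath c 0 b := ⟨hb0, ccont, ne_top_of_lt hvar⟩
    have hfc : IsRectPath ((g ∘ h) ∘ c) 0 b :=
      ⟨hb0, (gcont.comp hcont).comp_continuousOn ccont,
        by rw [hf.1 c 0 b hcrect]; exact ne_top_of_lt hvar⟩
    obtain ⟨_, huniqZ⟩ := hg.2 ((g ∘ h) ∘ c) 0 b hfc z₀
      (by simp [Function.comp_apply, hc0, hbase])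
    have heq : EqOn (h' ∘ c) (h ∘ c) (Icc 0 b) := by
      refine huniqZ (h' ∘ c) (h ∘ c)
        ⟨h'cont.comp_continuousOn ccont, by simp [Function.comp_apply, hc0, h'base],
          fun t ht => congrFun hgh' (c t)⟩
        ⟨hcont.comp_continuousOn ccont, by simp [Function.comp_apply, hc0, hbase],
          fun t ht => rfl⟩
    have := heq (right_mem_Icc.2 hb0)
    simpa [Function.comp_apply, hcb] using this
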